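/- Let n ≥ 6 and let L ⊆ ℤ^n be such that the translates l + S(n,e), l ∈ L, partition ℤ^n (i.e., L is a PL(n,e)-code). For a 6-dimensional sector T and an integer i, let t_{T,i} denote the number of l ∈ L with |(l + S(n,e)) ∩ T| = i. Then for every 6-dimensional sector T one has t_{T,1} − t_{T,7} − 10·t_{T,22} + 10·t_{T,42} + t_{T,57} − t_{T,63} ≥ 0. -/

import Mathlib

set_option maxRecDepth 100000

/-- binary hamming distance on 6-bit numbers -/
def dn (a b : ℕ) : ℕ :=
  (if a % 2 = b % 2 then 0 else 1) + (if a / 2 % 2 = b / 2 % 2 then 0 else 1) +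
  (if a / 4 % 2 = b / 4 % 2 then 0 else 1) + (if a / 8 % 2 = b / 8 % 2 then 0 else 1) +
  (if a / 16 % 2 = b / 16 % 2 then 0 else 1) + (if a / 32 % 2 = b / 32 % 2 then 0 else 1)

def d64 (a b : Fin 64) : ℕ := dn a.val b.val

def bal (c : Fin 64) (r : ℕ) : Finset (Fin 64) := Finset.univ.filter fun s => d64 s c ≤ r

def bsz : ℕ → ℕ
  | 0 => 1 | 1 => 7 | 2 => 22 | 3 => 42 | 4 => 57 | 5 => 63 | _ => 64

lemma mem_bal {s c : Fin 64} {r : ℕ} : s ∈ bal c r ↔ d64 s c ≤ r := by simp [bal]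

lemma d64_tb : ∀ a b : Fin 64, d64 a b =
    (if a.val.testBit 0 = b.val.testBit 0 then 0 else 1) +
    (if a.val.testBit 1 = b.val.testBit 1 then 0 else 1) +
    (if a.val.testBit 2 = b.val.testBit 2 then 0 else 1) +
    (if a.val.testBit 3 = b.val.testBit 3 then 0 else 1) +
    (if a.val.testBit 4 = b.val.testBit 4 then 0 else 1) +
    (if a.val.testBit 5 = b.val.testBit 5 then 0 else 1) := by decide

lemma bal_card : ∀ (c : Fin 64) (r : Fin 7), (bal c r).card = bsz r := by decide

lemma bal_card' (c : Fin 64) {r : ℕ} (hr : r ≤ 6) : (bal c r).card = bsz r := by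
  have := bal_card c ⟨r, by omega⟩; simpa using this

lemma far_card : ∀ c : Fin 64, (Finset.univ.filter fun s => 5 ≤ d64 s c).card = 7 := by decide

lemma d64_le6 : ∀ s c : Fin 64, d64 s c ≤ 6 := by decide

lemma FA0 : ∀ c x : Fin 64, (∀ s, ¬(d64 s 0 ≤ 2 ∧ d64 s c ≤ 2)) →
    (∀ s, ¬(d64 s x ≤ 1 ∧ d64 s 0 ≤ 2)) → (∀ s, ¬(d64 s x ≤ 1 ∧ d64 s c ≤ 2)) → False := by
  decide

lemma FB0 : ∀ x : Fin 64, (∀ s, ¬(d64 s x ≤ 1 ∧ d64 s 0 ≤ 2)) →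
    2 ≤ ((bal x 1).filter fun s => 5 ≤ d64 s 0).card := by decide

lemma FC0 : ∀ x y : Fin 64, x.val.testBit 4 = false → x.val.testBit 5 = false →
    y.val.testBit 4 = false → y.val.testBit 5 = false →
    (∀ s, ¬(d64 s x ≤ 1 ∧ d64 s 0 ≤ 1)) → (∀ s, ¬(d64 s y ≤ 1 ∧ d64 s 0 ≤ 1)) →
    (∀ s, ¬(d64 s x ≤ 1 ∧ d64 s y ≤ 1)) → False := by decide

/-- xor translation on the cube -/
def xx (a t : Fin 64) : Fin 64 :=
  ⟨a.val ^^^ t.val, Nat.xor_lt_two_pow (n := 6) a.isLt t.isLt⟩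

lemma xx_invol (a t : Fin 64) : xx (xx a t) t = a :=
  Fin.ext (xor_cancel_right _ _)

lemma xx_self (a : Fin 64) : xx a a = 0 := Fin.ext (Nat.xor_self _)

lemma xx_inj (t : Fin 64) : Function.Injective (fun a => xx a t) := by
  intro a b h
  have := congrArg (fun z => xx z t) h
  simpa [xx_invol] using this

lemma d64_xx (a b t : Fin 64) : d64 (xx a t) (xx b t) = d64 a b := by
  have hb : ∀ p q r : Bool, ((p.xor r = q.xor r) ↔ (p = q)) := by decide
  rw [d64_tb, d64_tb]
  simp only [xx, Nat.testBit_xor, hb]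

lemma d64_xx_right (s v t : Fin 64) : d64 s (xx v t) = d64 (xx s t) v := by
  rw [← d64_xx (xx s t) v t, xx_invol]

lemma d64_zero (s t : Fin 64) : d64 s 0 = d64 (xx s t) t := by
  rw [← xx_self t, d64_xx_right]

lemma bal_xx (v t : Fin 64) (r : ℕ) : bal (xx v t) r = (bal v r).image (fun a => xx a t) := by
  ext s
  simp only [mem_bal, Finset.mem_image]
  constructor
  · intro h
    exact ⟨xx s t, by rwa [← d64_xx_right], xx_invol s t⟩
  · rintro ⟨w, hw, rfl⟩
    rwa [d64_xx_right, xx_invol]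

section Core
variable {α : Type*} [DecidableEq α]

lemma core (K : Finset α) (c : α → Fin 64) (r : α → ℕ)
    (hr : ∀ k ∈ K, r k ≤ 6)
    (hdisj : ∀ k1 ∈ K, ∀ k2 ∈ K, k1 ≠ k2 → Disjoint (bal (c k1) (r k1)) (bal (c k2) (r k2)))
    (hcov : ∀ s : Fin 64, ∃ k ∈ K, s ∈ bal (c k) (r k)) :
    0 ≤ ((K.filter fun k => r k = 0).card : ℤ) - (K.filter fun k => r k = 1).card
      - 10 * (K.filter fun k => r k = 2).card + 10 * (K.filter fun k => r k = 3).card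
      + (K.filter fun k => r k = 4).card - (K.filter fun k => r k = 5).card := by
  set a : ℕ → ℕ := fun j => (K.filter fun k => r k = j).card with ha
  -- pointwise disjointness
  have hD : ∀ k1 ∈ K, ∀ k2 ∈ K, k1 ≠ k2 → ∀ s : Fin 64,
      ¬(d64 s (c k1) ≤ r k1 ∧ d64 s (c k2) ≤ r k2) := by
    intro k1 h1 k2 h2 hne s hs
    exact Finset.disjoint_left.mp (hdisj k1 h1 k2 h2 hne) (mem_bal.mpr hs.1) (mem_bal.mpr hs.2)
  -- total count
  have hbig : (K.biUnion fun k => bal (c k) (r k)) = Finset.univ := by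
    apply Finset.eq_univ_iff_forall.mpr
    intro s
    exact Finset.mem_biUnion.mpr (hcov s)
  have h64 : ∑ k ∈ K, (bal (c k) (r k)).card = 64 := by
    rw [← Finset.card_biUnion hdisj, hbig]
    simp
  have hsum : ∑ j ∈ Finset.range 7, a j * bsz j = 64 := by
    rw [← h64]
    have h1 : ∑ k ∈ K, (bal (c k) (r k)).card = ∑ k ∈ K, bsz (r k) :=
      Finset.sum_congr rfl (fun k hk => bal_card' _ (hr k hk))
    have h2 : ∑ j ∈ Finset.range 7, ∑ k ∈ K.filter fun k => r k = j, bsz (r k)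
        = ∑ k ∈ K, bsz (r k) :=
      Finset.sum_fiberwise_of_maps_to (fun k hk => Finset.mem_range.mpr (by
        have := hr k hk; omega)) _
    rw [h1, ← h2]
    refine Finset.sum_congr rfl (fun j _ => ?_)
    rw [Finset.sum_congr rfl (fun k hk => by rw [(Finset.mem_filter.mp hk).2]),
      Finset.sum_const, smul_eq_mul, ha]
  have e7 : a 0 * 1 + a 1 * 7 + a 2 * 22 + a 3 * 42 + a 4 * 57 + a 5 * 63 + a 6 * 64 = 64 := by
    have h0 : bsz 0 = 1 := rfl
    have h1 : bsz 1 = 7 := rfl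
    have h2 : bsz 2 = 22 := rfl
    have h3 : bsz 3 = 42 := rfl
    have h4 : bsz 4 = 57 := rfl
    have h5 : bsz 5 = 63 := rfl
    have h6 : bsz 6 = 64 := rfl
    simp only [Finset.sum_range_succ, Finset.sum_range_zero, h0, h1, h2, h3, h4, h5, h6,
      zero_add] at hsum
    omega
  -- G1 : two disjoint radius-2 balls leave no room for a radius-1 ball
  have G1 : 2 ≤ a 2 → a 1 = 0 := by
    intro h2
    by_contra h1
    have h1' : 1 ≤ a 1 := Nat.pos_of_ne_zero h1
    obtain ⟨t2, ht2sub, ht2card⟩ := Finset.exists_subset_card_eq h2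
    obtain ⟨k1, k2, hk12, rfl⟩ := Finset.card_eq_two.mp ht2card
    have hk1 := Finset.mem_filter.mp (ht2sub (show k1 ∈ ({k1, k2} : Finset α) by simp))
    have hk2 := Finset.mem_filter.mp (ht2sub (show k2 ∈ ({k1, k2} : Finset α) by simp))
    obtain ⟨k3, hk3⟩ := Finset.card_pos.mp (show 0 < a 1 by omega)
    have hk3 := Finset.mem_filter.mp hk3
    have hk31 : k3 ≠ k1 := fun h => by rw [h, hk1.2] at hk3; exact absurd hk3.2 (by omega)
    have hk32 : k3 ≠ k2 := fun h => by rw [h, hk2.2] at hk3; exact absurd hk3.2 (by omega)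
    refine FA0 (xx (c k2) (c k1)) (xx (c k3) (c k1)) ?_ ?_ ?_
    · intro s hs
      refine hD k1 hk1.1 k2 hk2.1 hk12 (xx s (c k1)) ⟨?_, ?_⟩
      · rw [hk1.2, ← d64_zero s (c k1)]; exact hs.1
      · rw [hk2.2, ← d64_xx_right]; exact hs.2
    · intro s hs
      refine hD k3 hk3.1 k1 hk1.1 hk31 (xx s (c k1)) ⟨?_, ?_⟩
      · rw [hk3.2, ← d64_xx_right]; exact hs.1
      · rw [hk1.2, ← d64_zero s (c k1)]; exact hs.2
    · intro s hs
      refine hD k3 hk3.1 k2 hk2.1 hk32 (xx s (c k1)) ⟨?_, ?_⟩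
      · rw [hk3.2, ← d64_xx_right]; exact hs.1
      · rw [hk2.2, ← d64_xx_right]; exact hs.2
  -- G2 : a radius-2 ball allows at most 3 disjoint radius-1 balls
  have G2 : 1 ≤ a 2 → 2 * a 1 ≤ 7 := by
    intro h2
    obtain ⟨k2, hk2⟩ := Finset.card_pos.mp (show 0 < a 2 by omega)
    have hk2 := Finset.mem_filter.mp hk2
    set K1 := K.filter (fun k => r k = 1) with hK1
    set G : α → Finset (Fin 64) :=
      fun k => (bal (c k) 1).filter fun s => 5 ≤ d64 s (c k2) with hG
    have hlb : ∀ k ∈ K1, 2 ≤ (G k).card := by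
      intro k hk
      have hk' := Finset.mem_filter.mp hk
      have hne : k ≠ k2 := fun h => by rw [h, hk2.2] at hk'; exact absurd hk'.2 (by omega)
      have hF := FB0 (xx (c k) (c k2)) (by
        intro s hs
        refine hD k hk'.1 k2 hk2.1 hne (xx s (c k2)) ⟨?_, ?_⟩
        · rw [hk'.2, ← d64_xx_right]; exact hs.1
        · rw [hk2.2, ← d64_zero s (c k2)]; exact hs.2)
      rw [bal_xx, Finset.filter_image] at hF
      rw [Finset.card_image_of_injective _ (xx_inj (c k2))] at hF
      have : ((bal (c k) 1).filter fun s => 5 ≤ d64 (xx s (c k2)) 0)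
          = (bal (c k) 1).filter fun s => 5 ≤ d64 s (c k2) := by
        refine Finset.filter_congr (fun s _ => ?_)
        rw [d64_zero (xx s (c k2)) (c k2), xx_invol]
      rwa [this] at hF
    have hGsub : ∀ k ∈ K1, G k ⊆ Finset.univ.filter fun s => 5 ≤ d64 s (c k2) := by
      intro k _ s hs
      simp only [hG, Finset.mem_filter] at hs ⊢
      exact ⟨Finset.mem_univ s, hs.2⟩
    have hGdisj : ∀ k ∈ K1, ∀ k' ∈ K1, k ≠ k' → Disjoint (G k) (G k') := by
      intro k hk k' hk' hne
      have hk := Finset.mem_filter.mp hk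
      have hk' := Finset.mem_filter.mp hk'
      have := hdisj k hk.1 k' hk'.1 hne
      rw [hk.2, hk'.2] at this
      exact Disjoint.mono (Finset.filter_subset _ _) (Finset.filter_subset _ _) this
    have hcard : (K1.biUnion G).card = ∑ k ∈ K1, (G k).card := Finset.card_biUnion hGdisj
    have hsub : K1.biUnion G ⊆ Finset.univ.filter fun s => 5 ≤ d64 s (c k2) := by
      intro s hs
      obtain ⟨k, hk, hks⟩ := Finset.mem_biUnion.mp hs
      exact hGsub k hk hks
    have h7 : (K1.biUnion G).card ≤ 7 := by
      calc (K1.biUnion G).card ≤ (Finset.univ.filter fun s => 5 ≤ d64 s (c k2)).card :=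
            Finset.card_le_card hsub
        _ = 7 := far_card _
    have h2a : 2 * K1.card ≤ ∑ k ∈ K1, (G k).card := by
      rw [two_mul]
      calc K1.card + K1.card = ∑ _k ∈ K1, 2 := by rw [Finset.sum_const, smul_eq_mul]; ring
        _ ≤ ∑ k ∈ K1, (G k).card := Finset.sum_le_sum hlb
    have : 2 * K1.card ≤ 7 := by omega
    exact this
  -- G3 : at most 8 disjoint radius-1 balls
  have G3 : a 1 ≤ 8 := by
    by_contra hcon
    have h9 : 9 ≤ a 1 := by omega
    set K1 := K.filter (fun k => r k = 1) with hK1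
    have haK1 : a 1 = K1.card := rfl
    -- pigeonhole on bit 5
    have hsplit5 := Finset.card_filter_add_card_filter_not
      (s := K1) (p := fun k => (c k).val.testBit 5 = true)
    have : ∃ b5 : Bool, 5 ≤ (K1.filter fun k => (c k).val.testBit 5 = b5).card := by
      rcases Nat.lt_or_ge ((K1.filter fun k => (c k).val.testBit 5 = true).card) (5 : ℕ)
        with h | h
      case inr => exact ⟨true, h⟩
      · refine ⟨false, ?_⟩
        have heq : (K1.filter fun k => ¬((c k).val.testBit 5 = true))
            = K1.filter fun k => (c k).val.testBit 5 = false := by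
          refine Finset.filter_congr (fun k _ => ?_)
          simp
        rw [heq] at hsplit5
        omega
    obtain ⟨b5, hb5⟩ := this
    set K5 := K1.filter (fun k => (c k).val.testBit 5 = b5) with hK5
    have hK5card : 5 ≤ K5.card := hb5
    have hsplit4 := Finset.card_filter_add_card_filter_not
      (s := K5) (p := fun k => (c k).val.testBit 4 = true)
    have : ∃ b4 : Bool, 3 ≤ (K5.filter fun k => (c k).val.testBit 4 = b4).card := by
      rcases Nat.lt_or_ge ((K5.filter fun k => (c k).val.testBit 4 = true).card) (3 : ℕ)
        with h | h
      case inr => exact ⟨true, h⟩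
      · refine ⟨false, ?_⟩
        have heq : (K5.filter fun k => ¬((c k).val.testBit 4 = true))
            = K5.filter fun k => (c k).val.testBit 4 = false := by
          refine Finset.filter_congr (fun k _ => ?_)
          simp
        rw [heq] at hsplit4
        omega
    obtain ⟨b4, hb4⟩ := this
    obtain ⟨t3, ht3sub, ht3card⟩ := Finset.exists_subset_card_eq hb4
    obtain ⟨x, y, z, hxy, hxz, hyz, rfl⟩ := Finset.card_eq_three.mp ht3card
    have hmem : ∀ w ∈ ({x, y, z} : Finset α), w ∈ K ∧ r w = 1 ∧
        (c w).val.testBit 4 = b4 ∧ (c w).val.testBit 5 = b5 := by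
      intro w hw
      have h1 := Finset.mem_filter.mp (ht3sub hw)
      have h2 := Finset.mem_filter.mp h1.1
      have h3 := Finset.mem_filter.mp h2.1
      exact ⟨h3.1, h3.2, h1.2, h2.2⟩
    have hx' := hmem x (by simp)
    have hy' := hmem y (by simp)
    have hz' := hmem z (by simp)
    -- translate by c z and apply FC0
    have htb : ∀ (w : α), (c w).val.testBit 4 = b4 → (c w).val.testBit 5 = b5 →
        (xx (c w) (c z)).val.testBit 4 = false ∧ (xx (c w) (c z)).val.testBit 5 = false := by
      intro w h4 h5
      constructor
      · show ((c w).val ^^^ (c z).val).testBit 4 = false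
        rw [Nat.testBit_xor, h4, hz'.2.2.1, Bool.xor_self]
      · show ((c w).val ^^^ (c z).val).testBit 5 = false
        rw [Nat.testBit_xor, h5, hz'.2.2.2, Bool.xor_self]
    have hdd : ∀ w w', w ∈ K → w' ∈ K → r w = 1 → r w' = 1 → w ≠ w' →
        ∀ s : Fin 64, ¬(d64 s (xx (c w) (c z)) ≤ 1 ∧ d64 s (xx (c w') (c z)) ≤ 1) := by
      intro w w' hw hw' hrw hrw' hne s hs
      refine hD w hw w' hw' hne (xx s (c z)) ⟨?_, ?_⟩
      · rw [hrw, ← d64_xx_right]; exact hs.1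
      · rw [hrw', ← d64_xx_right]; exact hs.2
    refine FC0 (xx (c x) (c z)) (xx (c y) (c z))
      (htb x hx'.2.2.1 hx'.2.2.2).1 (htb x hx'.2.2.1 hx'.2.2.2).2
      (htb y hy'.2.2.1 hy'.2.2.2).1 (htb y hy'.2.2.1 hy'.2.2.2).2 ?_ ?_ ?_
    · have h0 : (0 : Fin 64) = xx (c z) (c z) := (xx_self _).symm
      rw [h0]
      exact hdd x z hx'.1 hz'.1 hx'.2.1 hz'.2.1 hxz
    · have h0 : (0 : Fin 64) = xx (c z) (c z) := (xx_self _).symm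
      rw [h0]
      exact hdd y z hy'.1 hz'.1 hy'.2.1 hz'.2.1 hyz
    · exact hdd x y hx'.1 hy'.1 hx'.2.1 hy'.2.1 hxy
  -- final arithmetic
  simp only [ha] at e7 G1 G2 G3
  set n0 := (K.filter fun k => r k = 0).card with hn0
  set n1 := (K.filter fun k => r k = 1).card with hn1
  set n2 := (K.filter fun k => r k = 2).card with hn2
  set n3 := (K.filter fun k => r k = 3).card with hn3
  set n4 := (K.filter fun k => r k = 4).card with hn4
  set n5 := (K.filter fun k => r k = 5).card with hn5
  set n6 := (K.filter fun k => r k = 6).card with hn6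
  have hb2 : n2 ≤ 2 := by omega
  have hb3 : n3 ≤ 1 := by omega
  have hb4 : n4 ≤ 1 := by omega
  have hb5 : n5 ≤ 1 := by omega
  have hb6 : n6 ≤ 1 := by omega
  clear_value n0 n1 n2 n3 n4 n5 n6
  by_cases hc2 : 2 ≤ n2
  · have hg1 := G1 hc2
    interval_cases n2 <;> interval_cases n3 <;> interval_cases n4 <;>
      interval_cases n5 <;> interval_cases n6 <;> omega
  · by_cases hc1 : 1 ≤ n2
    · have hg2 := G2 hc1
      interval_cases n2 <;> interval_cases n3 <;> interval_cases n4 <;>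
        interval_cases n5 <;> interval_cases n6 <;> omega
    · interval_cases n2 <;> interval_cases n3 <;> interval_cases n4 <;>
        interval_cases n5 <;> interval_cases n6 <;> omega
end Core

/-! ### encoding of the boolean cube -/

def encN (f : Fin 6 → Bool) : ℕ := ∑ j : Fin 6, if f j then 2 ^ (j : ℕ) else 0

lemma encN_lt : ∀ f, encN f < 64 := by decide

def encFin (f : Fin 6 → Bool) : Fin 64 := ⟨encN f, encN_lt f⟩

lemma enc_tb : ∀ (f : Fin 6 → Bool) (j : Fin 6), (encFin f).val.testBit j.val = f j := by decide

lemma enc_inj : Function.Injective encFin := by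
  intro f g h
  funext j
  rw [← enc_tb f j, ← enc_tb g j, h]

lemma enc_surj : Function.Surjective encFin := by
  have hcard : Fintype.card (Fin 6 → Bool) = Fintype.card (Fin 64) := by simp
  exact ((Fintype.bijective_iff_injective_and_card encFin).mpr ⟨enc_inj, hcard⟩).2

def cnt (s t : Fin 6 → Bool) : ℕ := ∑ j : Fin 6, if s j = t j then 0 else 1

lemma cnt_bridge : ∀ s t, d64 (encFin s) (encFin t) = cnt s t := by decide

lemma cnt_le6 (s t : Fin 6 → Bool) : cnt s t ≤ 6 := by
  rw [← cnt_bridge]; exact d64_le6 _ _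

/-! ### main theorem -/

/-- The Lee sphere `S(n,e) = {x ∈ ℤ^n : |x_1| + ⋯ + |x_n| ≤ e}`. -/
def LeeSphere (n e : ℕ) : Set (Fin n → ℤ) :=
  {x | (∑ i, |x i|) ≤ (e : ℤ)}

/-- A `PL(n,e)`-code: every point of `ℤ^n` is within Lee distance `e` of exactly one
codeword; equivalently the translates `c + S(n,e)`, `c ∈ C`, partition `ℤ^n`. -/
def IsPLCode (n e : ℕ) (C : Set (Fin n → ℤ)) : Prop :=
  ∀ x : Fin n → ℤ, ∃! c, c ∈ C ∧ (∑ i, |x i - c i|) ≤ (e : ℤ)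

/-- A `6`-dimensional sector in `ℤ^n`: a translate of
`{x : x_i ∈ {0,1} for i ∈ I, x_i = 0 otherwise}` for some `6`-element set `I` of
coordinates. -/
def IsSector6 (n : ℕ) (T : Set (Fin n → ℤ)) : Prop :=
  ∃ (t : Fin n → ℤ) (I : Finset (Fin n)), I.card = 6 ∧
    T = {x | ∀ i, (i ∈ I → x i = t i ∨ x i = t i + 1) ∧ (i ∉ I → x i = t i)}

theorem post_sector_inequality (n e : ℕ) (hn : 6 ≤ n) (L : Set (Fin n → ℤ))
    (hL : IsPLCode n e L) (T : Set (Fin n → ℤ)) (hT : IsSector6 n T)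
    (t : ℕ → ℕ)
    (ht : ∀ i, t i = {l ∈ L | (((fun v => l + v) '' LeeSphere n e) ∩ T).ncard = i}.ncard) :
    0 ≤ (t 1 : ℤ) - t 7 - 10 * t 22 + 10 * t 42 + t 57 - t 63 := by
  classical
  obtain ⟨t0, I, hI, hTdef⟩ := hT
  -- the order isomorphism enumerating the 6 special coordinates
  obtain ⟨σ, hσ⟩ : ∃ σ', σ' = I.orderIsoOfFin hI := ⟨_, rfl⟩
  obtain ⟨u, hu⟩ : ∃ u', u' = fun j : Fin 6 => ((σ j : {x // x ∈ I}) : Fin n) := ⟨_, rfl⟩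
  have hu_mem : ∀ j, u j ∈ I := fun j => by rw [hu]; exact (σ j).2
  have hu_inj : Function.Injective u := by
    intro a b h
    rw [hu] at h
    exact σ.injective (Subtype.ext h)
  have hIimg : I = Finset.image u Finset.univ := by
    refine (Finset.eq_of_subset_of_card_le ?_ ?_).symm
    · intro i hi
      obtain ⟨j, _, rfl⟩ := Finset.mem_image.mp hi
      exact hu_mem j
    · rw [Finset.card_image_of_injective _ hu_inj, hI]
      simp
  -- total inversion map
  obtain ⟨jdx, hjdx⟩ : ∃ j', j' = fun i : Fin n =>
      if h : i ∈ I then σ.symm ⟨i, h⟩ else (0 : Fin 6) := ⟨_, rfl⟩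
  have hjdx_apply : ∀ (i : Fin n) (h : i ∈ I), jdx i = σ.symm ⟨i, h⟩ := by
    intro i h
    rw [hjdx]
    simp only [dif_pos h]
  have hjdx_u : ∀ j, jdx (u j) = j := by
    intro j
    rw [hjdx_apply (u j) (hu_mem j)]
    have e1 : (⟨u j, hu_mem j⟩ : {x // x ∈ I}) = σ j :=
      Subtype.ext (show u j = ((σ j : {x // x ∈ I}) : Fin n) by rw [hu])
    rw [e1, OrderIso.symm_apply_apply]
  have hu_jdx : ∀ (i : Fin n), i ∈ I → u (jdx i) = i := by
    intro i h
    rw [hjdx_apply i h, hu]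
    try exact congrArg Subtype.val (σ.apply_symm_apply ⟨i, h⟩)
  -- the cube parametrization
  obtain ⟨p, hp⟩ : ∃ p', p' = fun (s : Fin 6 → Bool) (i : Fin n) =>
      t0 i + (if i ∈ I then (if s (jdx i) then (1 : ℤ) else 0) else 0) := ⟨_, rfl⟩
  have hP1 : ∀ s i, i ∈ I → p s i = t0 i + (if s (jdx i) then 1 else 0) := by
    intro s i h
    rw [hp]
    simp only [if_pos h]
  have hP2 : ∀ s i, i ∉ I → p s i = t0 i := by
    intro s i h
    rw [hp]
    simp only [if_neg h, add_zero]
  have hpinj : Function.Injective p := by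
    intro s1 s2 h
    funext j
    have h2 := congrFun h (u j)
    rw [hP1 s1 _ (hu_mem j), hP1 s2 _ (hu_mem j), hjdx_u] at h2
    have h3 := add_left_cancel h2
    cases hs1 : s1 j <;> cases hs2 : s2 j
    · rfl
    · rw [hs1, hs2] at h3; exfalso; simp at h3
    · rw [hs1, hs2] at h3; exfalso; simp at h3
    · rfl
  have hTr : T = Set.range p := by
    rw [hTdef]
    ext x
    simp only [Set.mem_setOf_eq, Set.mem_range]
    constructor
    · intro hx
      refine ⟨fun j => decide (x (u j) = t0 (u j) + 1), ?_⟩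
      funext i
      by_cases h : i ∈ I
      · rw [hP1 _ i h, hu_jdx i h]
        rcases (hx i).1 h with h1 | h1
        · rw [decide_eq_false (by omega), h1]
          simp
        · rw [decide_eq_true h1, h1]
          simp
      · rw [hP2 _ i h]
        exact ((hx i).2 h).symm
    · rintro ⟨s, rfl⟩
      intro i
      constructor
      · intro h
        rw [hP1 s i h]
        cases s (jdx i) <;> simp
      · intro h
        exact hP2 s i h
  -- membership in a translated sphere
  have hmem_img : ∀ (l x : Fin n → ℤ),
      x ∈ (fun v => l + v) '' LeeSphere n e ↔ (∑ i, |x i - l i|) ≤ (e : ℤ) := by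
    intro l x
    constructor
    · rintro ⟨v, hv, rfl⟩
      simpa [LeeSphere] using hv
    · intro h
      exact ⟨x - l, by simpa [LeeSphere] using h, by simp⟩
  -- distance functional and center/radius data
  obtain ⟨D, hD⟩ : ∃ D', D' = fun (l : Fin n → ℤ) (s : Fin 6 → Bool) =>
      ∑ i, |p s i - l i| := ⟨_, rfl⟩
  obtain ⟨ν, hν⟩ : ∃ ν', ν' = fun (l : Fin n → ℤ) (j : Fin 6) =>
      decide (t0 (u j) - l (u j) < 0) := ⟨_, rfl⟩
  obtain ⟨m, hm⟩ : ∃ m', m' = fun (l : Fin n → ℤ) => (e : ℤ) - D l (ν l) := ⟨_, rfl⟩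
  obtain ⟨ρ, hρ⟩ : ∃ ρ', ρ' = fun (l : Fin n → ℤ) => min (m l).toNat 6 := ⟨_, rfl⟩
  have hρ6 : ∀ l, ρ l ≤ 6 := by
    intro l
    rw [hρ]
    exact min_le_right _ _
  -- the key computation
  have hKEY : ∀ l s, D l s = D l (ν l) + (cnt s (ν l) : ℤ) := by
    intro l s
    have term : ∀ i : Fin n, |p s i - l i| = |p (ν l) i - l i| +
        (if i ∈ I then (if s (jdx i) = ν l (jdx i) then (0 : ℤ) else 1) else 0) := by
      intro i
      by_cases h : i ∈ I
      · rw [if_pos h, hP1 s i h, hP1 (ν l) i h]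
        have hνi : ν l (jdx i) = decide (t0 i - l i < 0) := by
          rw [hν]
          simp only
          rw [hu_jdx i h]
        rw [hνi]
        have e1 : ∀ b : Bool, t0 i + (if b then (1:ℤ) else 0) - l i
            = (t0 i - l i) + (if b then 1 else 0) := by intro b; ring
        rw [e1, e1]
        rcases lt_or_ge (t0 i - l i) 0 with hlt | hle
        · rw [decide_eq_true hlt]
          cases hs : s (jdx i) <;>
            simp only [hs, Bool.false_eq_true, Bool.true_eq_false, if_false, if_true,
              eq_self_iff_true, ite_true, ite_false, add_zero] <;>
            rw [Int.abs_eq_natAbs, Int.abs_eq_natAbs] <;> omega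
        · rw [decide_eq_false (not_lt.mpr hle)]
          cases hs : s (jdx i) <;>
            simp only [hs, Bool.false_eq_true, Bool.true_eq_false, if_false, if_true,
              eq_self_iff_true, ite_true, ite_false, add_zero] <;>
            rw [Int.abs_eq_natAbs, Int.abs_eq_natAbs] <;> omega
      · rw [if_neg h, hP2 s i h, hP2 (ν l) i h, add_zero]
    have hsum1 : D l s = D l (ν l) +
        ∑ i : Fin n, (if i ∈ I then (if s (jdx i) = ν l (jdx i) then (0 : ℤ) else 1) else 0) := by
      rw [hD]
      simp only
      rw [Finset.sum_congr rfl (fun i _ => term i), Finset.sum_add_distrib]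
    rw [hsum1]
    congr 1
    rw [Finset.sum_ite_mem, Finset.univ_inter, hIimg,
      Finset.sum_image (fun a _ b _ hab => hu_inj hab)]
    have hc : (cnt s (ν l) : ℤ) = ∑ j : Fin 6, (if s j = ν l j then (0:ℤ) else 1) := by
      unfold cnt
      push_cast
      exact Finset.sum_congr rfl (fun j _ => by split <;> simp)
    rw [hc]
    exact Finset.sum_congr rfl (fun j _ => by rw [hjdx_u])
  have hmle : ∀ l s, D l (ν l) ≤ D l s := by
    intro l s
    rw [hKEY l s]
    exact le_add_of_nonneg_right (by positivity)
  -- characterization of the ball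
  have hballchar : ∀ l, 0 ≤ m l → ∀ s, (cnt s (ν l) ≤ ρ l ↔ D l s ≤ (e : ℤ)) := by
    intro l hml s
    have hk := hKEY l s
    have hm' : m l = (e : ℤ) - D l (ν l) := by rw [hm]
    have hρ' : ρ l = min (m l).toNat 6 := by rw [hρ]
    have hc6 := cnt_le6 s (ν l)
    constructor
    · intro hle
      rw [hρ'] at hle
      have h1 : cnt s (ν l) ≤ (m l).toNat := le_trans hle (min_le_left _ _)
      omega
    · intro hle
      rw [hρ']
      have h1 : (cnt s (ν l) : ℤ) ≤ m l := by omega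
      omega
  have hmemball : ∀ l, 0 ≤ m l → ∀ s,
      (encFin s ∈ bal (encFin (ν l)) (ρ l) ↔ D l s ≤ (e : ℤ)) := by
    intro l hml s
    rw [mem_bal, cnt_bridge]
    exact hballchar l hml s
  -- the codeword assignment
  have hL' : ∀ s, ∃ c, (c ∈ L ∧ (∑ i, |p s i - c i|) ≤ (e : ℤ)) ∧
      ∀ y, (y ∈ L ∧ (∑ i, |p s i - y i|) ≤ (e : ℤ)) → y = c := fun s => hL (p s)
  choose g hg hguniq using hL'
  have hgL : ∀ s, g s ∈ L := fun s => (hg s).1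
  have hgD : ∀ s, (∑ i, |p s i - g s i|) ≤ (e : ℤ) := fun s => (hg s).2
  have hgD' : ∀ s, D (g s) s ≤ (e : ℤ) := by
    intro s
    rw [hD]
    exact hgD s
  obtain ⟨K, hK⟩ : ∃ K', K' = (Finset.univ : Finset (Fin 6 → Bool)).image g := ⟨_, rfl⟩
  have hgK : ∀ s, g s ∈ K := by
    intro s
    rw [hK]
    exact Finset.mem_image_of_mem g (Finset.mem_univ s)
  have hKm : ∀ k ∈ K, k ∈ L ∧ 0 ≤ m k := by
    intro k hk
    rw [hK] at hk
    obtain ⟨s, _, rfl⟩ := Finset.mem_image.mp hk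
    refine ⟨hgL s, ?_⟩
    rw [hm]
    simp only
    have := le_trans (hmle (g s) s) (hgD' s)
    omega
  -- the partition hypotheses over Fin 64
  have hcov : ∀ a : Fin 64, ∃ k ∈ K, a ∈ bal (encFin (ν k)) (ρ k) := by
    intro a
    obtain ⟨s, rfl⟩ := enc_surj a
    exact ⟨g s, hgK s, (hmemball (g s) (hKm _ (hgK s)).2 s).mpr (hgD' s)⟩
  have huniq2 : ∀ (k : Fin n → ℤ) (s : Fin 6 → Bool), k ∈ K →
      encFin s ∈ bal (encFin (ν k)) (ρ k) → k = g s := by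
    intro k s hk hmem
    have h1 := (hmemball k (hKm k hk).2 s).mp hmem
    rw [hD] at h1
    exact hguniq s k ⟨(hKm k hk).1, h1⟩
  have hdisj : ∀ k1 ∈ K, ∀ k2 ∈ K, k1 ≠ k2 →
      Disjoint (bal (encFin (ν k1)) (ρ k1)) (bal (encFin (ν k2)) (ρ k2)) := by
    intro k1 h1 k2 h2 hne
    rw [Finset.disjoint_left]
    intro a ha1 ha2
    obtain ⟨s, rfl⟩ := enc_surj a
    exact hne ((huniq2 k1 s h1 ha1).trans (huniq2 k2 s h2 ha2).symm)
  have hcore := core K (fun k => encFin (ν k)) ρ (fun k _ => hρ6 k) hdisj hcov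
  -- intersections and cardinalities
  have hint : ∀ l : Fin n → ℤ,
      ((fun v => l + v) '' LeeSphere n e) ∩ T = p '' {s | D l s ≤ (e : ℤ)} := by
    intro l
    ext x
    simp only [Set.mem_inter_iff, hmem_img, hTr, Set.mem_range, Set.mem_image,
      Set.mem_setOf_eq]
    constructor
    · rintro ⟨hd, s, rfl⟩
      exact ⟨s, by rw [hD]; exact hd, rfl⟩
    · rintro ⟨s, hs, rfl⟩
      rw [hD] at hs
      exact ⟨hs, s, rfl⟩
  have hncard : ∀ l, 0 ≤ m l →
      (((fun v => l + v) '' LeeSphere n e) ∩ T).ncard = bsz (ρ l) := by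
    intro l hml
    rw [hint l, Set.ncard_image_of_injective _ hpinj]
    have himg : encFin '' {s | D l s ≤ (e : ℤ)} = ↑(bal (encFin (ν l)) (ρ l)) := by
      ext a
      constructor
      · rintro ⟨s, hs, rfl⟩
        exact Finset.mem_coe.mpr ((hmemball l hml s).mpr hs)
      · intro ha
        obtain ⟨s, rfl⟩ := enc_surj a
        exact ⟨s, (hmemball l hml s).mp (Finset.mem_coe.mp ha), rfl⟩
    calc {s | D l s ≤ (e : ℤ)}.ncard
        = (encFin '' {s | D l s ≤ (e : ℤ)}).ncard :=
          (Set.ncard_image_of_injective _ enc_inj).symm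
      _ = (↑(bal (encFin (ν l)) (ρ l)) : Set (Fin 64)).ncard := by rw [himg]
      _ = (bal (encFin (ν l)) (ρ l)).card := Set.ncard_coe_finset _
      _ = bsz (ρ l) := bal_card' _ (hρ6 l)
  have hset : ∀ i : ℕ, 1 ≤ i →
      {l ∈ L | (((fun v => l + v) '' LeeSphere n e) ∩ T).ncard = i}
        = ↑(K.filter fun k => bsz (ρ k) = i) := by
    intro i hi
    ext l
    simp only [Set.mem_setOf_eq, Finset.coe_filter]
    constructor
    · rintro ⟨hlL, hcard⟩
      have hne : (((fun v => l + v) '' LeeSphere n e) ∩ T).Nonempty := by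
        rw [Set.nonempty_iff_ne_empty]
        intro h0
        rw [h0, Set.ncard_empty] at hcard
        omega
      obtain ⟨x, hx⟩ := hne
      rw [hint l] at hx
      obtain ⟨s, hs, rfl⟩ := hx
      rw [hD] at hs
      have hlg : l = g s := hguniq s l ⟨hlL, hs⟩
      have hlK : l ∈ K := hlg ▸ hgK s
      exact ⟨hlK, by rw [← hncard l (hKm l hlK).2]; exact hcard⟩
    · rintro ⟨hlK, hcard⟩
      exact ⟨(hKm l hlK).1, by rw [hncard l (hKm l hlK).2]; exact hcard⟩
  have ht' : ∀ i j : ℕ, 1 ≤ i → (∀ r : ℕ, r ≤ 6 → (bsz r = i ↔ r = j)) →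
      t i = (K.filter fun k => ρ k = j).card := by
    intro i j hi hbij
    rw [ht i, hset i hi, Set.ncard_coe_finset]
    congr 1
    exact Finset.filter_congr (fun k _ => hbij (ρ k) (hρ6 k))
  rw [ht' 1 0 (by norm_num) (fun r hr => by interval_cases r <;> decide),
    ht' 7 1 (by norm_num) (fun r hr => by interval_cases r <;> decide),
    ht' 22 2 (by norm_num) (fun r hr => by interval_cases r <;> decide),
    ht' 42 3 (by norm_num) (fun r hr => by interval_cases r <;> decide),
    ht' 57 4 (by norm_num) (fun r hr => by interval_cases r <;> decide),
    ht' 63 5 (by norm_num) (fun r hr => by interval_cases r <;> decide)]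
  exact hcore
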